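/- For every finite family of finite connected graphs F_1, ..., F_k and every ε > 0 there exists δ > 0 such that for all finite graphs G, H with maximum degree at most d, if d_s(G,H) ≤ δ then |dens(F_i, G) - dens(F_i, H)| ≤ ε for every 1 ≤ i ≤ k, where dens(F, G) is the number of subgraphs of G isomorphic to F divided by |V(G)|. -/

import Mathlib

open MeasureTheory Filter Topology

/-- A rooted `(r,d)`-ball: a finite connected rooted graph with maximum degree at most `d`
in which every vertex is within distance `rad` of the root. -/
structure Ball (d : ℕ) where
  rad : ℕ
  n : ℕ
  graph : SimpleGraph (Fin n)
  root : Fin n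
  conn : graph.Connected
  deg : ∀ v, (graph.neighborSet v).ncard ≤ d
  small : ∀ v, graph.dist root v ≤ rad

/-- Rooted isomorphism of rooted graphs. -/
def RootedIso {V W : Type*} (G : SimpleGraph V) (x : V) (H : SimpleGraph W) (y : W) : Prop :=
  ∃ e : G ≃g H, e x = y

/-- The vertex set of the ball of radius `r` around `x`. -/
def ballVerts {V : Type*} (G : SimpleGraph V) (r : ℕ) (x : V) : Set V :=
  {y | G.Reachable x y ∧ G.dist x y ≤ r}

lemma rootMemBall {V : Type*} (G : SimpleGraph V) (r : ℕ) (x : V) : x ∈ ballVerts G r x :=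
  ⟨SimpleGraph.Reachable.refl x, by simp [SimpleGraph.dist_self]⟩

/-- The rooted `r`-ball of `G` around `x` is rooted-isomorphic to the rooted graph `(H,y)`. -/
def ballIso {V W : Type*} (G : SimpleGraph V) (r : ℕ) (x : V)
    (H : SimpleGraph W) (y : W) : Prop :=
  RootedIso (G.induce (ballVerts G r x)) ⟨x, rootMemBall G r x⟩ H y

/-- `pfreq G α` is the fraction of vertices of `G` whose rooted `α.rad`-ball is
isomorphic to the rooted ball `α`. -/
noncomputable def pfreq {V : Type*} {d : ℕ} (G : SimpleGraph V) (α : Ball d) : ℝ :=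
  ({x : V | ballIso G α.rad x α.graph α.root}).ncard / (Nat.card V)

/-- The statistical distance of two finite graphs with respect to an enumeration `E`
of all rooted `(r,d)`-balls. -/
noncomputable def ds {d : ℕ} (E : ℕ → Ball d) {V W : Type*}
    (G : SimpleGraph V) (H : SimpleGraph W) : ℝ :=
  ∑' i : ℕ, (1 / 2 : ℝ) ^ (i + 1) * |pfreq G (E i) - pfreq H (E i)|

/-- `E` enumerates all rooted `(r,d)`-balls up to rooted isomorphism. -/
def Covers {d : ℕ} (E : ℕ → Ball d) : Prop :=
  ∀ β : Ball d, ∃ i, (E i).rad = β.rad ∧ RootedIso (E i).graph (E i).root β.graph β.root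

/-- Maximum degree of `G` is at most `d`. -/
def DegLe {V : Type*} (G : SimpleGraph V) (d : ℕ) : Prop :=
  ∀ v, (G.neighborSet v).ncard ≤ d

/-- The "sparse" `F`-density of `G`: the number of subgraphs of `G` isomorphic to
`F`, divided by the number of vertices of `G`. -/
noncomputable def dens {V : Type*} {m : ℕ} (F : SimpleGraph (Fin m))
    (G : SimpleGraph V) : ℝ :=
  ({H : G.Subgraph | Nonempty (H.coe ≃g F)}).ncard / (Nat.card V)


namespace Aux
open SimpleGraph

lemma rootedIso_refl {V : Type*} (G : SimpleGraph V) (x : V) : RootedIso G x G x :=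
  ⟨Iso.refl, rfl⟩

lemma rootedIso_symm {V W : Type*} {G : SimpleGraph V} {H : SimpleGraph W} {x : V} {y : W}
    (h : RootedIso G x H y) : RootedIso H y G x := by
  obtain ⟨e, he⟩ := h
  exact ⟨e.symm, by simp [← he]⟩

lemma rootedIso_trans {U V W : Type*} {G : SimpleGraph U} {H : SimpleGraph V}
    {K : SimpleGraph W} {x : U} {y : V} {z : W}
    (h : RootedIso G x H y) (h' : RootedIso H y K z) : RootedIso G x K z := by
  obtain ⟨e, he⟩ := h
  obtain ⟨e', he'⟩ := h'
  exact ⟨e.trans e', by simp [he, he']⟩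

variable {α β : Type*} {A : SimpleGraph α} {B : SimpleGraph β}

/-- Pull back a subgraph along an embedding, keeping all edges of `T` between
vertices in the image. -/
def liftSubgraph (f : A ↪g B) (T : B.Subgraph) : A.Subgraph where
  verts := f ⁻¹' T.verts
  Adj a b := T.Adj (f a) (f b)
  adj_sub h := f.map_adj_iff.mp (T.adj_sub h)
  edge_vert h := T.edge_vert h
  symm := ⟨fun _ _ h => T.adj_symm h⟩

lemma map_liftSubgraph (f : A ↪g B) (T : B.Subgraph) (hT : T.verts ⊆ Set.range f) :
    (liftSubgraph f T).map f.toHom = T := by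
  ext u v
  · constructor
    · rintro ⟨a, ha, rfl⟩; exact ha
    · intro hu
      obtain ⟨a, rfl⟩ := hT hu
      exact ⟨a, hu, rfl⟩
  · constructor
    · rintro ⟨a, b, h, rfl, rfl⟩; exact h
    · intro h
      obtain ⟨a, rfl⟩ := hT (T.edge_vert h)
      obtain ⟨b, rfl⟩ := hT (T.edge_vert (T.adj_symm h))
      exact ⟨a, b, h, rfl, rfl⟩

lemma liftSubgraph_map (f : A ↪g B) (S : A.Subgraph) :
    liftSubgraph f (S.map f.toHom) = S := by
  ext u v
  · constructor
    · rintro ⟨a, ha, hfa⟩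
      rwa [f.injective hfa] at ha
    · intro hu; exact ⟨u, hu, rfl⟩
  · constructor
    · rintro ⟨a, b, h, hfa, hfb⟩
      rwa [f.injective hfa, f.injective hfb] at h
    · intro h; exact ⟨u, v, h, rfl, rfl⟩

lemma map_injective (f : A ↪g B) : Function.Injective (Subgraph.map f.toHom) :=
  Function.LeftInverse.injective (liftSubgraph_map f)

/-- The coe of a mapped subgraph is isomorphic to the original coe. -/
noncomputable def mapCoeIso (f : A ↪g B) (S : A.Subgraph) :
    S.coe ≃g (S.map f.toHom).coe where
  toEquiv := (Equiv.Set.image f S.verts f.injective).trans (Equiv.setCongr (by simp))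
  map_rel_iff' := by
    rintro ⟨a, ha⟩ ⟨b, hb⟩
    simp only [Equiv.trans_apply, Equiv.Set.image_apply, Equiv.setCongr_apply]
    show (S.map f.toHom).Adj (f a) (f b) ↔ S.Adj a b
    constructor
    · rintro ⟨a', b', h, hfa, hfb⟩
      rwa [f.injective hfa, f.injective hfb] at h
    · intro h; exact ⟨a, b, h, rfl, rfl⟩

/-- Number of subgraphs isomorphic to `F` containing a given vertex. -/
noncomputable def cnt {m : ℕ} (F : SimpleGraph (Fin m)) {α : Type*}
    (A : SimpleGraph α) (a : α) : ℕ :=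
  {S : A.Subgraph | Nonempty (S.coe ≃g F) ∧ a ∈ S.verts}.ncard

lemma cnt_iso {m : ℕ} (F : SimpleGraph (Fin m)) {α β : Type*}
    {A : SimpleGraph α} {B : SimpleGraph β} {a : α} {b : β}
    (h : RootedIso A a B b) : cnt F A a = cnt F B b := by
  obtain ⟨e, he⟩ := h
  have himg : {S : B.Subgraph | Nonempty (S.coe ≃g F) ∧ b ∈ S.verts} =
      (Subgraph.map e.toEmbedding.toHom) '' {S : A.Subgraph | Nonempty (S.coe ≃g F) ∧ a ∈ S.verts} := by
    ext T
    constructor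
    · rintro ⟨⟨eT⟩, hb⟩
      have hrange : T.verts ⊆ Set.range e.toEmbedding := by
        intro u _; exact ⟨e.symm u, by simp⟩
      have h1 := map_liftSubgraph e.toEmbedding T hrange
      have h2 : Nonempty (((liftSubgraph e.toEmbedding T).map e.toEmbedding.toHom).coe ≃g F) :=
        h1.symm ▸ (⟨eT⟩ : Nonempty (T.coe ≃g F))
      obtain ⟨eT'⟩ := h2
      refine ⟨liftSubgraph e.toEmbedding T, ⟨⟨?_, ?_⟩, h1⟩⟩
      · exact ⟨(mapCoeIso e.toEmbedding _).trans eT'⟩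
      · show e a ∈ T.verts
        rwa [he]
    · rintro ⟨S, ⟨⟨eS⟩, haS⟩, rfl⟩
      refine ⟨⟨(mapCoeIso e.toEmbedding S).symm.trans eS⟩, ?_⟩
      exact ⟨a, haS, he⟩
  rw [cnt, cnt, himg, Set.ncard_image_of_injective _ (map_injective e.toEmbedding)]

end Aux

section C2
open SimpleGraph
namespace Aux

lemma verts_subset_ball {V : Type*} {m : ℕ} {F : SimpleGraph (Fin m)} (hF : F.Connected)
    {G : SimpleGraph V} {x : V} {S : G.Subgraph} (eS : S.coe ≃g F) (hx : x ∈ S.verts) :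
    S.verts ⊆ ballVerts G m x := by
  classical
  intro y hy
  haveI : Fintype ↥S.verts := Fintype.ofEquiv (Fin m) eS.toEquiv.symm
  have hcard : Fintype.card ↥S.verts = m := by
    rw [Fintype.card_congr eS.toEquiv, Fintype.card_fin]
  have hconn : S.coe.Connected := (Iso.connected_iff eS).mpr hF
  have hreach : S.coe.Reachable ⟨x, hx⟩ ⟨y, hy⟩ := hconn.preconnected _ _
  obtain ⟨p⟩ := hreach
  have hlen : p.bypass.length < m := hcard ▸ p.bypass_isPath.length_lt
  refine ⟨⟨p.bypass.map S.hom⟩, ?_⟩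
  calc G.dist x y ≤ (p.bypass.map S.hom).length := SimpleGraph.dist_le _
    _ = p.bypass.length := Walk.length_map _ _
    _ ≤ m := hlen.le

lemma cnt_ball {V : Type*} {m : ℕ} {F : SimpleGraph (Fin m)} (hF : F.Connected)
    (G : SimpleGraph V) (x : V) :
    cnt F G x = cnt F (G.induce (ballVerts G m x)) ⟨x, rootMemBall G m x⟩ := by
  classical
  set K := ballVerts G m x with hK
  set f : G.induce K ↪g G := Embedding.induce K with hf
  have hrangef : Set.range f = K := by
    ext y
    constructor
    · rintro ⟨a, rfl⟩; exact a.2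
    · intro hy; exact ⟨⟨y, hy⟩, rfl⟩
  have himg : {S : G.Subgraph | Nonempty (S.coe ≃g F) ∧ x ∈ S.verts} =
      (Subgraph.map f.toHom) ''
        {T : (G.induce K).Subgraph | Nonempty (T.coe ≃g F) ∧ (⟨x, rootMemBall G m x⟩ : K) ∈ T.verts} := by
    ext S
    constructor
    · rintro ⟨⟨eS⟩, hx⟩
      have hsub : S.verts ⊆ Set.range f := by
        rw [hrangef]; exact verts_subset_ball hF eS hx
      have h1 := map_liftSubgraph f S hsub
      have h2 : Nonempty (((liftSubgraph f S).map f.toHom).coe ≃g F) :=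
        h1.symm ▸ (⟨eS⟩ : Nonempty (S.coe ≃g F))
      obtain ⟨eS'⟩ := h2
      refine ⟨liftSubgraph f S, ⟨⟨(mapCoeIso f _).trans eS'⟩, ?_⟩, h1⟩
      show (f ⟨x, rootMemBall G m x⟩ : V) ∈ S.verts
      exact hx
    · rintro ⟨T, ⟨⟨eT⟩, hxT⟩, rfl⟩
      refine ⟨⟨(mapCoeIso f T).symm.trans eT⟩, ?_⟩
      exact ⟨⟨x, rootMemBall G m x⟩, hxT, rfl⟩
  rw [cnt, cnt, himg, Set.ncard_image_of_injective _ (map_injective f)]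

end Aux
end C2

section C3
open SimpleGraph
namespace Aux
variable {V : Type*}

def DegLe' {V : Type*} (G : SimpleGraph V) (d : ℕ) : Prop :=
  ∀ v, (G.neighborSet v).ncard ≤ d

lemma exists_induce_walk (G : SimpleGraph V) (K : Set V) :
    ∀ {u v : V} (p : G.Walk u v), (∀ y ∈ p.support, y ∈ K) → ∀ (hu : u ∈ K) (hv : v ∈ K),
      ∃ q : (G.induce K).Walk ⟨u, hu⟩ ⟨v, hv⟩, q.length ≤ p.length
  | u, _, SimpleGraph.Walk.nil, _, hu, hv => ⟨SimpleGraph.Walk.nil, by simp⟩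
  | u, v, @SimpleGraph.Walk.cons _ _ _ w _ hab p, hp, hu, hv => by
    have hb : w ∈ K := hp w (by simp)
    obtain ⟨q, hq⟩ := exists_induce_walk G K p (fun y hy => hp y (by simp [hy])) hb hv
    refine ⟨SimpleGraph.Walk.cons (by exact hab) q, ?_⟩
    show q.length + 1 ≤ p.length + 1
    exact Nat.succ_le_succ hq

lemma ball_reach (G : SimpleGraph V) (r : ℕ) (x : V) {y : V} (hy : y ∈ ballVerts G r x) :
    ∃ q : (G.induce (ballVerts G r x)).Walk ⟨x, rootMemBall G r x⟩ ⟨y, hy⟩, q.length ≤ r := by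
  classical
  obtain ⟨p, hp⟩ := hy.1.exists_walk_length_eq_dist
  have hsup : ∀ z ∈ p.support, z ∈ ballVerts G r x := by
    intro z hz
    refine ⟨⟨p.takeUntil z hz⟩, ?_⟩
    calc G.dist x z ≤ (p.takeUntil z hz).length := SimpleGraph.dist_le _
      _ ≤ p.length := Walk.length_takeUntil_le p hz
      _ = G.dist x y := hp
      _ ≤ r := hy.2
  obtain ⟨q, hq⟩ := exists_induce_walk G _ p hsup (rootMemBall G r x) hy
  exact ⟨q, hq.trans (by rw [hp]; exact hy.2)⟩

lemma ball_connected (G : SimpleGraph V) (r : ℕ) (x : V) :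
    (G.induce (ballVerts G r x)).Connected := by
  rw [SimpleGraph.connected_iff_exists_forall_reachable]
  refine ⟨⟨x, rootMemBall G r x⟩, ?_⟩
  rintro ⟨y, hy⟩
  obtain ⟨q, -⟩ := ball_reach G r x hy
  exact ⟨q⟩

lemma induce_deg [Finite V] {d : ℕ} (G : SimpleGraph V) (hG : DegLe' G d) (K : Set V)
    (v : ↥K) : ((G.induce K).neighborSet v).ncard ≤ d := by
  refine le_trans (Set.ncard_le_ncard_of_injOn (fun w => (w : V)) ?_ ?_ (Set.toFinite _)) (hG v)
  · rintro ⟨w, hwK⟩ hw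
    exact hw
  · exact fun a _ b _ h => Subtype.ext h

lemma exists_ball {d : ℕ} [Finite V] (G : SimpleGraph V) (hG : DegLe' G d)
    (r : ℕ) (x : V) : ∃ b : Ball d, b.rad = r ∧ ballIso G r x b.graph b.root := by
  classical
  obtain ⟨n, ⟨e⟩⟩ := Finite.exists_equiv_fin ↥(ballVerts G r x)
  set K := ballVerts G r x with hKdef
  let g : SimpleGraph (Fin n) :=
    { Adj := fun i j => (G.induce K).Adj (e.symm i) (e.symm j),
      symm := ⟨fun i j h => (G.induce K).adj_symm h⟩,
      loopless := ⟨fun i h => (G.induce K).irrefl h⟩ }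
  let iso : G.induce K ≃g g :=
    { toEquiv := e,
      map_rel_iff' := by
        intro a b
        show (G.induce K).Adj (e.symm (e a)) (e.symm (e b)) ↔ _
        simp }
  have hconn : g.Connected := (Iso.connected_iff iso).mp (ball_connected G r x)
  have hdeg : ∀ v, (g.neighborSet v).ncard ≤ d := by
    intro v
    refine le_trans (Set.ncard_le_ncard_of_injOn (fun w => e.symm w) ?_ ?_ (Set.toFinite _))
      (induce_deg G hG K (e.symm v))
    · intro w hw
      exact hw
    · exact fun a _ b _ h => by simpa using congrArg e h
  have hsmall : ∀ v, g.dist (e ⟨x, rootMemBall G r x⟩) v ≤ r := by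
    intro v
    obtain ⟨q, hq⟩ := ball_reach G r x (e.symm v).2
    have hlen : (q.map iso.toHom).length ≤ r := by
      rw [SimpleGraph.Walk.length_map]
      exact hq
    have h1 := (SimpleGraph.dist_le (q.map iso.toHom)).trans hlen
    have h2 : g.dist (e ⟨x, rootMemBall G r x⟩) (e (e.symm v)) ≤ r := h1
    simpa using h2
  exact ⟨⟨r, n, g, e ⟨x, rootMemBall G r x⟩, hconn, hdeg, hsmall⟩, rfl, ⟨iso, rfl⟩⟩

end Aux
end C3

section C4
open SimpleGraph Finset
namespace Aux

lemma ball_card_le {d : ℕ} (b : Ball d) : b.n ≤ (d + 1) ^ b.rad := by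
  classical
  set g := b.graph with hg
  set ρ := b.root with hρ
  set Bf : ℕ → Finset (Fin b.n) := fun j => univ.filter (fun v => g.dist ρ v ≤ j) with hBf
  have hstep : ∀ j, (Bf (j+1)).card ≤ (d+1) * (Bf j).card := by
    intro j
    have hsub : Bf (j+1) ⊆ (Bf j).biUnion
        (fun u => insert u ((Set.toFinite (g.neighborSet u)).toFinset)) := by
      intro v hv
      simp only [hBf, mem_filter, mem_univ, true_and] at hv
      rcases Nat.lt_or_ge (g.dist ρ v) (j+1) with h | h
      · refine mem_biUnion.mpr ⟨v, ?_, mem_insert_self _ _⟩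
        simp [hBf, Nat.lt_succ_iff.mp h]
      · have hd' : g.dist ρ v = j + 1 := le_antisymm hv h
        have hre : g.Reachable ρ v := b.conn.preconnected ρ v
        obtain ⟨p, hp⟩ := hre.exists_walk_length_eq_dist
        have hnotnil : ¬ p.reverse.Nil := by
          rw [SimpleGraph.Walk.not_nil_iff_lt_length, SimpleGraph.Walk.length_reverse, hp, hd']
          omega
        obtain ⟨u, hadj, p', hp'⟩ := SimpleGraph.Walk.not_nil_iff.mp hnotnil
        have hlen : p'.length = j := by
          have h2 := congrArg SimpleGraph.Walk.length hp'
          rw [SimpleGraph.Walk.length_reverse, hp, hd'] at h2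
          simp only [SimpleGraph.Walk.length_cons] at h2
          omega
        have hu : g.dist ρ u ≤ j := by
          have h3 := SimpleGraph.dist_le p'.reverse
          rwa [SimpleGraph.Walk.length_reverse, hlen] at h3
        refine mem_biUnion.mpr ⟨u, by simp [hBf, hu], ?_⟩
        refine mem_insert_of_mem ?_
        rw [Set.Finite.mem_toFinset]
        exact hadj.symm
    calc (Bf (j+1)).card
        ≤ ((Bf j).biUnion (fun u => insert u ((Set.toFinite (g.neighborSet u)).toFinset))).card :=
          card_le_card hsub
      _ ≤ ∑ u ∈ Bf j, (insert u ((Set.toFinite (g.neighborSet u)).toFinset)).card :=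
          card_biUnion_le
      _ ≤ ∑ _u ∈ Bf j, (d+1) := by
          refine sum_le_sum ?_
          intro u _
          refine (card_insert_le _ _).trans ?_
          have h4 : ((Set.toFinite (g.neighborSet u)).toFinset).card = (g.neighborSet u).ncard :=
            (Set.ncard_eq_toFinset_card _ _).symm
          rw [h4]
          exact Nat.succ_le_succ (b.deg u)
      _ = (d+1) * (Bf j).card := by rw [sum_const, smul_eq_mul, Nat.mul_comm]
  have hiter : ∀ j, (Bf j).card ≤ (d+1)^j := by
    intro j
    induction j with
    | zero =>
      have hsub0 : Bf 0 ⊆ {ρ} := by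
        intro v hv
        simp only [hBf, mem_filter, mem_univ, true_and, Nat.le_zero] at hv
        rcases (SimpleGraph.dist_eq_zero_iff_eq_or_not_reachable.mp hv) with h | h
        · simp [h]
        · exact absurd (b.conn.preconnected ρ v) h
      simpa using card_le_card hsub0
    | succ j ih =>
      refine (hstep j).trans ?_
      calc (d+1) * (Bf j).card ≤ (d+1) * (d+1)^j := Nat.mul_le_mul_left _ ih
        _ = (d+1)^(j+1) := by ring
  have huniv : (univ : Finset (Fin b.n)) = Bf b.rad := by
    symm
    rw [hBf]
    refine filter_true_of_mem ?_
    intro v _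
    exact b.small v
  have := hiter b.rad
  rwa [← huniv, card_univ, Fintype.card_fin] at this

end Aux
end C4

section C5
open SimpleGraph
open scoped Classical
namespace Aux
variable {d : ℕ} {E : ℕ → Ball d}

noncomputable def idx (hE : Covers E) (β : Ball d) : ℕ := Nat.find (hE β)

lemma idx_rad (hE : Covers E) (β : Ball d) : (E (idx hE β)).rad = β.rad :=
  (Nat.find_spec (hE β)).1

lemma idx_iso (hE : Covers E) (β : Ball d) :
    RootedIso (E (idx hE β)).graph (E (idx hE β)).root β.graph β.root :=
  (Nat.find_spec (hE β)).2

lemma idx_congr (hE : Covers E) {β γ : Ball d} (hrad : β.rad = γ.rad)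
    (hiso : RootedIso β.graph β.root γ.graph γ.root) : idx hE β = idx hE γ := by
  apply le_antisymm
  · exact Nat.find_le ⟨(idx_rad hE γ).trans hrad.symm,
      rootedIso_trans (idx_iso hE γ) (rootedIso_symm hiso)⟩
  · exact Nat.find_le ⟨(idx_rad hE β).trans hrad,
      rootedIso_trans (idx_iso hE β) hiso⟩

lemma rootedIso_of_sigma_eq {x y : Σ n : ℕ, SimpleGraph (Fin n) × Fin n} (h : x = y) :
    RootedIso x.2.1 x.2.2 y.2.1 y.2.2 := by
  subst h; exact rootedIso_refl _ _

lemma finite_simpleGraph (n : ℕ) : Finite (SimpleGraph (Fin n)) :=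
  Finite.of_injective (fun g => g.Adj) (fun _ _ h => SimpleGraph.ext h)

/-- The set of indices that arise as chosen representatives of radius-`r` balls. -/
def reps (hE : Covers E) (r : ℕ) : Set ℕ := {i | ∃ β : Ball d, β.rad = r ∧ idx hE β = i}

lemma reps_finite (hE : Covers E) (r : ℕ) : (reps hE r).Finite := by
  have hN : ∀ i ∈ reps hE r, (E i).n ≤ (d+1)^r := by
    rintro i ⟨β, hβr, rfl⟩
    have := ball_card_le (E (idx hE β))
    rwa [idx_rad hE β, hβr] at this
  set φ : ℕ → Σ n : ℕ, SimpleGraph (Fin n) × Fin n :=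
    fun i => ⟨(E i).n, ((E i).graph, (E i).root)⟩ with hφ
  have hinj : Set.InjOn φ (reps hE r) := by
    rintro i ⟨β, hβr, hβi⟩ j ⟨γ, hγr, hγj⟩ he
    have hij : RootedIso (E i).graph (E i).root (E j).graph (E j).root :=
      rootedIso_of_sigma_eq he
    have hir : (E i).rad = r := by rw [← hβi, idx_rad hE β, hβr]
    have hjr : (E j).rad = r := by rw [← hγj, idx_rad hE γ, hγr]
    have hβγ : RootedIso β.graph β.root γ.graph γ.root := by
      refine rootedIso_trans (rootedIso_symm ?_) (rootedIso_trans hij ?_)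
      · rw [← hβi]; exact idx_iso hE β
      · rw [← hγj]; exact idx_iso hE γ
    rw [← hβi, ← hγj]
    exact idx_congr hE (hβr.trans hγr.symm) hβγ
  have htarget : Set.Finite {x : Σ n : ℕ, SimpleGraph (Fin n) × Fin n | x.1 ≤ (d+1)^r} := by
    have hsub : {x : Σ n : ℕ, SimpleGraph (Fin n) × Fin n | x.1 ≤ (d+1)^r} ⊆
        ⋃ n ∈ Set.Iic ((d+1)^r), (Sigma.mk n '' Set.univ) := by
      intro x hx
      exact Set.mem_biUnion hx ⟨x.2, Set.mem_univ _, Sigma.eta x⟩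
    refine Set.Finite.subset (Set.Finite.biUnion (Set.finite_Iic _) ?_) hsub
    intro n _
    haveI := finite_simpleGraph n
    exact Set.Finite.image _ Set.finite_univ
  have himg : φ '' (reps hE r) ⊆ {x | x.1 ≤ (d+1)^r} := by
    rintro _ ⟨i, hi, rfl⟩
    exact hN i hi
  exact Set.Finite.of_finite_image (htarget.subset himg) hinj

noncomputable def repFinset (hE : Covers E) (r : ℕ) : Finset ℕ := (reps_finite hE r).toFinset

lemma mem_repFinset (hE : Covers E) (r : ℕ) (i : ℕ) :
    i ∈ repFinset hE r ↔ ∃ β : Ball d, β.rad = r ∧ idx hE β = i := by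
  simp [repFinset, reps, Set.Finite.mem_toFinset]

end Aux
end C5

section C6
open SimpleGraph Finset
open scoped Classical
namespace Aux

lemma pfreq_nonneg {V : Type*} {d : ℕ} (G : SimpleGraph V) (α : Ball d) : 0 ≤ pfreq G α :=
  div_nonneg (Nat.cast_nonneg _) (Nat.cast_nonneg _)

lemma pfreq_le_one {V : Type*} {d : ℕ} [Finite V] (G : SimpleGraph V) (α : Ball d) :
    pfreq G α ≤ 1 := by
  rw [pfreq]
  have h1 : ({x : V | ballIso G α.rad x α.graph α.root}).ncard ≤ Nat.card V := by
    rw [← Set.ncard_univ]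
    exact Set.ncard_le_ncard (Set.subset_univ _) Set.finite_univ
  exact div_le_one_of_le₀ (Nat.cast_le.mpr h1) (Nat.cast_nonneg _)

lemma abs_pfreq_sub_le {V W : Type*} {d : ℕ} [Finite V] [Finite W]
    (G : SimpleGraph V) (H : SimpleGraph W) (α : Ball d) :
    |pfreq G α - pfreq H α| ≤ 2 := by
  have h1 := pfreq_nonneg G α
  have h2 := pfreq_le_one G α
  have h3 := pfreq_nonneg H α
  have h4 := pfreq_le_one H α
  rw [abs_le]
  constructor <;> linarith

lemma ds_term_summable {d : ℕ} (E : ℕ → Ball d) {V W : Type*} [Finite V] [Finite W]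
    (G : SimpleGraph V) (H : SimpleGraph W) :
    Summable (fun i : ℕ => (1 / 2 : ℝ) ^ (i + 1) * |pfreq G (E i) - pfreq H (E i)|) := by
  refine Summable.of_nonneg_of_le
    (fun i => mul_nonneg (by positivity) (abs_nonneg _)) (fun i => ?_)
    (summable_geometric_of_lt_one (by norm_num) (by norm_num : (1/2 : ℝ) < 1))
  calc (1 / 2 : ℝ) ^ (i + 1) * |pfreq G (E i) - pfreq H (E i)|
      ≤ (1 / 2 : ℝ) ^ (i + 1) * 2 := by
        refine mul_le_mul_of_nonneg_left (abs_pfreq_sub_le G H (E i)) (by positivity)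
    _ = (1 / 2 : ℝ) ^ i := by
        rw [pow_succ]
        ring
  
lemma ds_nonneg {d : ℕ} (E : ℕ → Ball d) {V W : Type*}
    (G : SimpleGraph V) (H : SimpleGraph W) : 0 ≤ ds E G H :=
  tsum_nonneg (fun i => mul_nonneg (by positivity) (abs_nonneg _))

lemma finite_subgraph {V : Type*} [Finite V] (G : SimpleGraph V) : Finite G.Subgraph := by
  refine Finite.of_injective (fun S => (S.verts, S.Adj)) ?_
  intro S T h
  rw [Prod.mk.injEq] at h
  exact SimpleGraph.Subgraph.ext h.1 h.2

/-- The key decomposition: `dens F G * m` is a finite linear combination of the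
ball frequencies with coefficients given by rooted subgraph counts. -/
lemma dens_eq {d : ℕ} {E : ℕ → Ball d} (hE : Covers E) {m : ℕ} (F : SimpleGraph (Fin m))
    (hF : F.Connected) {V : Type*} [Finite V] [Nonempty V] (G : SimpleGraph V)
    (hG : DegLe G d) :
    dens F G * m = ∑ i ∈ repFinset hE m,
      pfreq G (E i) * (cnt F (E i).graph (E i).root : ℝ) := by
  classical
  haveI := Fintype.ofFinite V
  haveI := finite_subgraph G
  haveI := Fintype.ofFinite G.Subgraph
  set 𝒮 : Finset G.Subgraph := univ.filter (fun S => Nonempty (S.coe ≃g F)) with h𝒮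
  have hdens : dens F G = (𝒮.card : ℝ) / (Nat.card V) := by
    have h0 : ({H : G.Subgraph | Nonempty (H.coe ≃g F)}).ncard = 𝒮.card := by
      rw [Set.ncard_eq_toFinset_card']
      congr 1
      ext S
      simp [h𝒮]
    show (({H : G.Subgraph | Nonempty (H.coe ≃g F)}).ncard : ℝ) / (Nat.card V) = _
    rw [h0]
  -- choose ball representatives
  have hball : ∀ x : V, ∃ b : Ball d, b.rad = m ∧ ballIso G m x b.graph b.root :=
    fun x => exists_ball G hG m x
  choose bOf hrad hiso using hball
  set gdx : V → ℕ := fun x => idx hE (bOf x) with hgdx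
  have hmaps : ∀ x : V, gdx x ∈ repFinset hE m :=
    fun x => (mem_repFinset hE m _).mpr ⟨bOf x, hrad x, rfl⟩
  have hcnt : ∀ x : V, cnt F G x = cnt F (E (gdx x)).graph (E (gdx x)).root := by
    intro x
    rw [cnt_ball hF G x]
    exact cnt_iso F (rootedIso_trans (hiso x) (rootedIso_symm (idx_iso hE (bOf x))))
  -- fibers are exactly the frequency sets
  have hfiber : ∀ i ∈ repFinset hE m,
      ((univ : Finset V).filter (fun x => gdx x = i)).card =
        ({x : V | ballIso G (E i).rad x (E i).graph (E i).root}).ncard := by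
    intro i hi
    obtain ⟨β, hβr, hβi⟩ := (mem_repFinset hE m i).mp hi
    have hEir : (E i).rad = m := by rw [← hβi, idx_rad, hβr]
    have hset : {x : V | ballIso G (E i).rad x (E i).graph (E i).root} =
        {x : V | gdx x = i} := by
      ext x
      simp only [Set.mem_setOf_eq]
      rw [hEir]
      constructor
      · intro h
        have h1 : RootedIso (bOf x).graph (bOf x).root β.graph β.root := by
          refine rootedIso_trans (rootedIso_symm (hiso x)) (rootedIso_trans h ?_)
          refine rootedIso_trans (rootedIso_symm ?_) (idx_iso hE β)
          rw [hβi]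
          exact rootedIso_refl _ _
        rw [hgdx, ← hβi]
        exact idx_congr hE ((hrad x).trans hβr.symm) h1
      · intro h
        have h2 : RootedIso (E i).graph (E i).root (bOf x).graph (bOf x).root := by
          rw [← h]
          exact idx_iso hE (bOf x)
        exact rootedIso_trans (hiso x) (rootedIso_symm h2)
    rw [hset, Set.ncard_eq_toFinset_card']
    congr 1
    ext x
    simp
  -- each subgraph isomorphic to F has m vertices
  have hverts : ∀ S ∈ 𝒮, (univ.filter (fun x : V => x ∈ S.verts)).card = m := by
    intro S hS
    obtain ⟨eS⟩ : Nonempty (S.coe ≃g F) := (Finset.mem_filter.mp hS).2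
    have h1 : (univ.filter (fun x : V => x ∈ S.verts)).card = S.verts.ncard := by
      rw [Set.ncard_eq_toFinset_card']
      congr 1
      ext x
      simp
    rw [h1, ← Nat.card_coe_set_eq, Nat.card_congr eS.toEquiv]
    simp
  -- double counting
  have hdouble : ∑ x : V, cnt F G x = 𝒮.card * m := by
    have h1 : ∀ x : V, cnt F G x = (𝒮.filter (fun S => x ∈ S.verts)).card := by
      intro x
      have h0 : cnt F G x =
          ({S : G.Subgraph | Nonempty (S.coe ≃g F) ∧ x ∈ S.verts}).ncard := rfl
      rw [h0, Set.ncard_eq_toFinset_card']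
      congr 1
      ext S
      simp [h𝒮, and_assoc]
    calc ∑ x : V, cnt F G x
        = ∑ x : V, ∑ S ∈ 𝒮, if x ∈ S.verts then 1 else 0 := by
          refine Finset.sum_congr rfl ?_
          intro x _
          rw [h1 x, Finset.card_filter]
      _ = ∑ S ∈ 𝒮, ∑ x : V, if x ∈ S.verts then 1 else 0 := Finset.sum_comm
      _ = ∑ S ∈ 𝒮, m := by
          refine Finset.sum_congr rfl ?_
          intro S hS
          rw [← Finset.card_filter]
          exact hverts S hS
      _ = 𝒮.card * m := by rw [Finset.sum_const, smul_eq_mul]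
  -- group by fibers
  have hgroup : ∑ x : V, cnt F G x = ∑ i ∈ repFinset hE m,
      ((univ : Finset V).filter (fun x => gdx x = i)).card * cnt F (E i).graph (E i).root := by
    rw [← Finset.sum_fiberwise_of_maps_to (fun x _ => hmaps x) (fun x => cnt F G x)]
    refine Finset.sum_congr rfl ?_
    intro i _
    have h2 : ∀ x ∈ (univ : Finset V).filter (fun x => gdx x = i),
        cnt F G x = cnt F (E i).graph (E i).root := by
      intro x hx
      have hgx : gdx x = i := (Finset.mem_filter.mp hx).2
      rw [hcnt x, hgx]
    rw [Finset.sum_congr rfl h2, Finset.sum_const, smul_eq_mul, Nat.mul_comm]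
  -- assemble over ℝ
  have hcV : (0 : ℝ) < (Nat.card V : ℝ) := by
    have := Nat.card_pos (α := V)
    exact_mod_cast this
  calc dens F G * m
      = ((𝒮.card * m : ℕ) : ℝ) / (Nat.card V) := by
        rw [hdens]
        push_cast
        ring
    _ = ((∑ x : V, cnt F G x : ℕ) : ℝ) / (Nat.card V) := by rw [hdouble]
    _ = ∑ i ∈ repFinset hE m,
          (((univ : Finset V).filter (fun x => gdx x = i)).card : ℝ) *
            (cnt F (E i).graph (E i).root : ℝ) / (Nat.card V) := by
        rw [hgroup]
        push_cast
        rw [Finset.sum_div]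
    _ = ∑ i ∈ repFinset hE m, pfreq G (E i) * (cnt F (E i).graph (E i).root : ℝ) := by
        refine Finset.sum_congr rfl ?_
        intro i hi
        have hp : pfreq G (E i) =
            (({x : V | ballIso G (E i).rad x (E i).graph (E i).root}).ncard : ℝ) /
              (Nat.card V) := rfl
        rw [hp, ← hfiber i hi]
        ring

end Aux
end C6

section C7
open SimpleGraph Finset
open scoped Classical
namespace Aux

lemma main_one {d : ℕ} (E : ℕ → Ball d) (hE : Covers E) {m : ℕ}
    (F : SimpleGraph (Fin m)) (hF : F.Connected) (ε : ℝ) (hε : 0 < ε) :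
    ∃ δ > (0 : ℝ), ∀ (V W : Type), Finite V → Finite W → Nonempty V → Nonempty W →
      ∀ (G : SimpleGraph V) (H : SimpleGraph W), DegLe G d → DegLe H d →
      ds E G H ≤ δ → |dens F G - dens F H| ≤ ε := by
  classical
  have hm : (0 : ℝ) < m := by
    have := hF.nonempty
    exact_mod_cast Fin.pos_iff_nonempty.mpr this
  set S : Finset ℕ := repFinset hE m with hS
  set C : ℝ := ∑ i ∈ S, (cnt F (E i).graph (E i).root : ℝ) with hC
  have hC0 : 0 ≤ C := Finset.sum_nonneg (fun i _ => Nat.cast_nonneg _)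
  set M : ℕ := S.sup id with hM
  have hden : (0 : ℝ) < (C + 1) * 2 ^ (M + 1) := by positivity
  refine ⟨ε * m / ((C + 1) * 2 ^ (M + 1)), by positivity, ?_⟩
  intro V W hFV hFW hNV hNW G H hG hH hds
  haveI := hFV; haveI := hFW; haveI := hNV; haveI := hNW
  have hdG := dens_eq hE F hF G hG
  have hdH := dens_eq hE F hF H hH
  -- per-index bound on frequency differences
  have hkey : ∀ i ∈ S, |pfreq G (E i) - pfreq H (E i)| ≤
      2 ^ (M + 1) * (ε * m / ((C + 1) * 2 ^ (M + 1))) := by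
    intro i hi
    have hterm : (1 / 2 : ℝ) ^ (i + 1) * |pfreq G (E i) - pfreq H (E i)| ≤ ds E G H :=
      Summable.le_tsum (ds_term_summable E G H) i
        (fun j _ => mul_nonneg (by positivity) (abs_nonneg _))
    have hiM : i ≤ M := Finset.le_sup (f := id) hi
    have h2 : (0 : ℝ) < (1 / 2 : ℝ) ^ (i + 1) := by positivity
    have h3 : |pfreq G (E i) - pfreq H (E i)| ≤ 2 ^ (i + 1) * ds E G H := by
      rw [← mul_le_mul_iff_right₀ h2]
      calc (1 / 2 : ℝ) ^ (i + 1) * |pfreq G (E i) - pfreq H (E i)| ≤ ds E G H := hterm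
        _ = (1 / 2 : ℝ) ^ (i + 1) * (2 ^ (i + 1) * ds E G H) := by
            rw [← mul_assoc, ← mul_pow]
            norm_num
    refine h3.trans ?_
    have h4 : (2 : ℝ) ^ (i + 1) ≤ 2 ^ (M + 1) :=
      pow_le_pow_right₀ (by norm_num) (by omega)
    have hds0 := ds_nonneg E G H
    calc (2 : ℝ) ^ (i + 1) * ds E G H ≤ 2 ^ (M + 1) * ds E G H :=
          mul_le_mul_of_nonneg_right h4 hds0
      _ ≤ 2 ^ (M + 1) * (ε * m / ((C + 1) * 2 ^ (M + 1))) :=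
          mul_le_mul_of_nonneg_left hds (by positivity)
  -- assemble
  have hsum : |dens F G * m - dens F H * m| ≤
      2 ^ (M + 1) * (ε * m / ((C + 1) * 2 ^ (M + 1))) * C := by
    rw [hdG, hdH, ← Finset.sum_sub_distrib]
    have h5 : ∀ i ∈ S, pfreq G (E i) * (cnt F (E i).graph (E i).root : ℝ) -
        pfreq H (E i) * (cnt F (E i).graph (E i).root : ℝ) =
        (pfreq G (E i) - pfreq H (E i)) * (cnt F (E i).graph (E i).root : ℝ) := by
      intro i _
      ring
    rw [Finset.sum_congr rfl h5]
    refine (Finset.abs_sum_le_sum_abs _ _).trans ?_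
    have h6 : ∀ i ∈ S, |(pfreq G (E i) - pfreq H (E i)) * (cnt F (E i).graph (E i).root : ℝ)|
        ≤ 2 ^ (M + 1) * (ε * m / ((C + 1) * 2 ^ (M + 1))) * (cnt F (E i).graph (E i).root : ℝ) := by
      intro i hi
      rw [abs_mul, abs_of_nonneg (Nat.cast_nonneg (α := ℝ) _)]
      exact mul_le_mul_of_nonneg_right (hkey i hi) (Nat.cast_nonneg _)
    refine (Finset.sum_le_sum h6).trans ?_
    rw [← Finset.mul_sum, ← hC]
  have habs : |dens F G - dens F H| * m ≤ ε * m * (C / (C + 1)) := by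
    have h7 : |dens F G * (m : ℝ) - dens F H * m| = |dens F G - dens F H| * m := by
      rw [show dens F G * (m : ℝ) - dens F H * m = (dens F G - dens F H) * m by ring,
        abs_mul, abs_of_pos hm]
    rw [← h7]
    refine hsum.trans (le_of_eq ?_)
    have h8 : C + 1 ≠ 0 := by linarith
    have h9 : ((2 : ℝ) ^ (M + 1)) ≠ 0 := by positivity
    field_simp
  have hfrac : C / (C + 1) ≤ 1 := by
    rw [div_le_one (by linarith)]
    linarith
  have hfinal : |dens F G - dens F H| * m ≤ ε * m := by
    refine habs.trans ?_
    calc ε * m * (C / (C + 1)) ≤ ε * m * 1 :=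
          mul_le_mul_of_nonneg_left hfrac (by positivity)
      _ = ε * m := by ring
  have := (mul_le_mul_iff_left₀ hm).mp hfinal
  exact this

end Aux
end C7


/-- For any finite family of finite connected graphs `F_1,…,F_k` and
any `ε > 0` there is `δ > 0` such that if two finite graphs of maximum degree at most
`d` satisfy `d_s(G,H) ≤ δ`, then their sparse `F_i`-densities differ by at most `ε`. -/
theorem dens_close_of_ds_close {d : ℕ} (hd : 1 ≤ d) (E : ℕ → Ball d) (hE : Covers E)
    (k : ℕ) (m : Fin k → ℕ) (F : ∀ i, SimpleGraph (Fin (m i)))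
    (hF : ∀ i, (F i).Connected) (ε : ℝ) (hε : 0 < ε) :
    ∃ δ > (0 : ℝ), ∀ (V W : Type), Finite V → Finite W → Nonempty V → Nonempty W →
      ∀ (G : SimpleGraph V) (H : SimpleGraph W), DegLe G d → DegLe H d →
      ds E G H ≤ δ → ∀ i, |dens (F i) G - dens (F i) H| ≤ ε := by

  classical
  have h : ∀ i : Fin k, ∃ δ > (0 : ℝ), ∀ (V W : Type), Finite V → Finite W →
      Nonempty V → Nonempty W → ∀ (G : SimpleGraph V) (H : SimpleGraph W),
      DegLe G d → DegLe H d → ds E G H ≤ δ → |dens (F i) G - dens (F i) H| ≤ ε :=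
    fun i => Aux.main_one E hE (F i) (hF i) ε hε
  choose δf hδf hprop using h
  rcases Nat.eq_zero_or_pos k with hk | hk
  · subst hk
    exact ⟨1, one_pos, fun V W _ _ _ _ G H _ _ _ i => i.elim0⟩
  · haveI : Nonempty (Fin k) := ⟨⟨0, hk⟩⟩
    refine ⟨Finset.univ.inf' Finset.univ_nonempty δf, ?_, ?_⟩
    · exact (Finset.lt_inf'_iff Finset.univ_nonempty).mpr (fun i _ => hδf i)
    · intro V W fV fW nV nW G H hG hH hds i
      exact hprop i V W fV fW nV nW G H hG hH
        (hds.trans (Finset.inf'_le _ (Finset.mem_univ i)))
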